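/- Let α ∈ (0,1), ω₁(t) = 1/(1-t)^(1-α), r_k = (k-1)/(k-α) for k ≥ 2 (r_1 = 0). For f_k(w) = w^k (k ≥ 2), the Bloch-type seminorm satisfies sup_{w∈𝔻} k|w|^(k-1)/ω₁(|w|) = k r_k^(k-1)/ω₁(r_k) = k r_k^(k-1) (1-r_k)^(1-α), and consequently lim_{k→∞} (ω₁(r_k)/k) · sup_{w∈𝔻} k|w|^(k-1)/ω₁(|w|) = lim_{k→∞} r_k^(k-1) = e^(α-1) > 0. -/

import Mathlib

open Set Filter Topology

private lemma self_le_exp_sub_one (x : ℝ) : x ≤ Real.exp (x - 1) := by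
  have := Real.add_one_le_exp (x - 1); linarith

private lemma key_max (α : ℝ) (hα0 : 0 < α) (hα1 : α < 1) (k : ℕ) (hk : 2 ≤ k)
    (t : ℝ) (ht0 : 0 ≤ t) (ht1 : t < 1) :
    t ^ (k - 1) * (1 - t) ^ (1 - α) ≤
      (((k : ℝ) - 1) / ((k : ℝ) - α)) ^ (k - 1) *
        (1 - ((k : ℝ) - 1) / ((k : ℝ) - α)) ^ (1 - α) := by
  have hk2 : (2 : ℝ) ≤ (k : ℝ) := by exact_mod_cast hk
  set c : ℝ := (k : ℝ) - α with hc_def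
  have hc : 0 < c := by have : (0:ℝ) < (k : ℝ) - α := by linarith
                        rwa [hc_def]
  have hc' : c ≠ 0 := hc.ne'
  set s : ℝ := ((k : ℝ) - 1) / c with hs_def
  have hs0 : 0 < s := div_pos (by linarith) hc
  have hs0' : s ≠ 0 := hs0.ne'
  have hsc : s * c = (k : ℝ) - 1 := div_mul_cancel₀ _ hc'
  have h1s : 1 - s = (1 - α) / c := by
    rw [eq_div_iff hc', sub_mul, one_mul, hsc, hc_def]
    ring
  have h1s0 : 0 < 1 - s := by rw [h1s]; exact div_pos (by linarith) hc
  have h1sc : (1 - s) * c = 1 - α := by rw [h1s]; field_simp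
  set n : ℕ := k - 1 with hn_def
  have hn1 : 1 ≤ n := by omega
  have hnr : (n : ℝ) = (k : ℝ) - 1 := by
    have : (n : ℝ) + 1 = (k : ℝ) := by
      have : n + 1 = k := by omega
      exact_mod_cast congrArg (fun m : ℕ => (m : ℝ)) this
    linarith
  have h1s0' : (1 - s) ≠ 0 := h1s0.ne'
  -- bound t ≤ s * exp ((t - s)/s)
  have h1 : t ≤ s * Real.exp ((t - s) / s) := by
    have h0 := self_le_exp_sub_one (t / s)
    have h' : t / s - 1 = (t - s) / s := by field_simp
    rw [h'] at h0
    exact (div_le_iff₀' hs0).mp h0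
  have h2 : 1 - t ≤ (1 - s) * Real.exp ((s - t) / (1 - s)) := by
    have h0 := self_le_exp_sub_one ((1 - t) / (1 - s))
    have h' : (1 - t) / (1 - s) - 1 = (s - t) / (1 - s) := by
      field_simp
      ring
    rw [h'] at h0
    exact (div_le_iff₀' h1s0).mp h0
  have hA : t ^ n ≤ s ^ n * Real.exp ((n : ℝ) * ((t - s) / s)) := by
    calc t ^ n ≤ (s * Real.exp ((t - s) / s)) ^ n := pow_le_pow_left₀ ht0 h1 n
    _ = s ^ n * Real.exp ((n : ℝ) * ((t - s) / s)) := by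
        rw [mul_pow, Real.exp_nat_mul]
  have hB : (1 - t) ^ (1 - α) ≤
      (1 - s) ^ (1 - α) * Real.exp (((s - t) / (1 - s)) * (1 - α)) := by
    have hle : (1 - t) ^ (1 - α) ≤
        ((1 - s) * Real.exp ((s - t) / (1 - s))) ^ (1 - α) :=
      Real.rpow_le_rpow (by linarith) h2 (by linarith)
    calc (1 - t) ^ (1 - α) ≤ ((1 - s) * Real.exp ((s - t) / (1 - s))) ^ (1 - α) := hle
    _ = (1 - s) ^ (1 - α) * Real.exp (((s - t) / (1 - s)) * (1 - α)) := by
        rw [Real.mul_rpow h1s0.le (Real.exp_pos _).le, Real.exp_mul]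
  have e1 : ((k : ℝ) - 1) * ((t - s) / s) = c * (t - s) := by
    rw [← hsc]; field_simp
  have e2 : ((s - t) / (1 - s)) * (1 - α) = c * (s - t) := by
    rw [← h1sc]; field_simp
  have hexp : (n : ℝ) * ((t - s) / s) + ((s - t) / (1 - s)) * (1 - α) = 0 := by
    rw [hnr, e1, e2]; ring
  calc t ^ n * (1 - t) ^ (1 - α)
      ≤ (s ^ n * Real.exp ((n : ℝ) * ((t - s) / s))) *
        ((1 - s) ^ (1 - α) * Real.exp (((s - t) / (1 - s)) * (1 - α))) := by
        apply mul_le_mul hA hB (Real.rpow_nonneg (by linarith) _)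
        positivity
  _ = s ^ n * (1 - s) ^ (1 - α) *
        Real.exp ((n : ℝ) * ((t - s) / s) + ((s - t) / (1 - s)) * (1 - α)) := by
        rw [Real.exp_add]; ring
  _ = s ^ n * (1 - s) ^ (1 - α) := by rw [hexp, Real.exp_zero, mul_one]

theorem monomial_bloch_seminorm (α : ℝ) (hα : α ∈ Ioo (0:ℝ) 1)
    (ω₁ : ℝ → ℝ) (hω₁ : ∀ t, ω₁ t = 1 / (1 - t) ^ (1 - α))
    (r : ℕ → ℝ) (hr1 : r 1 = 0)
    (hr : ∀ k : ℕ, 2 ≤ k → r k = ((k : ℝ) - 1) / ((k : ℝ) - α)) :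
    (∀ k : ℕ, 2 ≤ k →
      (∀ w : ℂ, ‖w‖ < 1 →
        (k : ℝ) * ‖w‖ ^ (k - 1) / ω₁ ‖w‖ ≤
          (k : ℝ) * (r k) ^ (k - 1) * (1 - r k) ^ (1 - α)) ∧
      (k : ℝ) * (r k) ^ (k - 1) / ω₁ (r k) =
        (k : ℝ) * (r k) ^ (k - 1) * (1 - r k) ^ (1 - α)) ∧
    Tendsto
      (fun k : ℕ => ω₁ (r k) / (k : ℝ) * ((k : ℝ) * (r k) ^ (k - 1) / ω₁ (r k)))
      atTop (𝓝 (Real.exp (α - 1))) ∧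
    0 < Real.exp (α - 1) := by
  obtain ⟨hα0, hα1⟩ := hα
  -- basic facts about r k for k ≥ 2
  have hrfacts : ∀ k : ℕ, 2 ≤ k → 0 < r k ∧ r k < 1 := by
    intro k hk
    have hk2 : (2 : ℝ) ≤ (k : ℝ) := by exact_mod_cast hk
    rw [hr k hk]
    constructor
    · exact div_pos (by linarith) (by linarith)
    · rw [div_lt_one (by linarith)]; linarith
  refine ⟨?_, ?_, Real.exp_pos _⟩
  · intro k hk
    have hk2 : (2 : ℝ) ≤ (k : ℝ) := by exact_mod_cast hk
    obtain ⟨hrk0, hrk1⟩ := hrfacts k hk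
    constructor
    · intro w hw
      rw [hω₁, one_div, div_inv_eq_mul]
      have hkey := key_max α hα0 hα1 k hk ‖w‖ (norm_nonneg w) hw
      rw [← hr k hk] at hkey
      calc (k : ℝ) * ‖w‖ ^ (k - 1) * (1 - ‖w‖) ^ (1 - α)
          = (k : ℝ) * (‖w‖ ^ (k - 1) * (1 - ‖w‖) ^ (1 - α)) := by ring
      _ ≤ (k : ℝ) * ((r k) ^ (k - 1) * (1 - r k) ^ (1 - α)) := by
          exact mul_le_mul_of_nonneg_left hkey (by positivity)
      _ = (k : ℝ) * (r k) ^ (k - 1) * (1 - r k) ^ (1 - α) := by ring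
    · rw [hω₁, one_div, div_inv_eq_mul]
  · -- the limit
    have hmain : Tendsto (fun k : ℕ => (r k) ^ (k - 1)) atTop
        (𝓝 (Real.exp (α - 1))) := by
      have hbase : Tendsto (fun m : ℕ => ((1 + (1 - α) / (m : ℝ)) ^ m)⁻¹) atTop
          (𝓝 (Real.exp (α - 1))) := by
        have := (Real.tendsto_one_add_div_pow_exp (1 - α)).inv₀ (Real.exp_ne_zero _)
        rw [← Real.exp_neg] at this
        convert this using 2
        ring
      rw [← Filter.tendsto_add_atTop_iff_nat 1]
      apply hbase.congr'
      filter_upwards [eventually_ge_atTop 1] with m hm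
      have hm0 : (0 : ℝ) < (m : ℝ) := by exact_mod_cast hm
      have hk : 2 ≤ m + 1 := by omega
      have hcast : ((m + 1 : ℕ) : ℝ) = (m : ℝ) + 1 := by push_cast; ring
      have hsub : (m + 1) - 1 = m := by omega
      rw [hsub, hr (m + 1) hk, hcast]
      have h2 : (1 + (1 - α) / (m : ℝ)) = ((m : ℝ) + 1 - α) / (m : ℝ) := by
        field_simp
        ring
      have h1 : ((m : ℝ) + 1 - 1) / ((m : ℝ) + 1 - α) = (1 + (1 - α) / (m : ℝ))⁻¹ := by
        rw [h2, inv_div]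
        norm_num
      rw [h1, inv_pow]
    apply hmain.congr'
    filter_upwards [eventually_ge_atTop 2] with k hk
    obtain ⟨hrk0, hrk1⟩ := hrfacts k hk
    have hω : ω₁ (r k) ≠ 0 := by
      rw [hω₁]
      have : (0 : ℝ) < (1 - r k) ^ (1 - α) := Real.rpow_pos_of_pos (by linarith) _
      positivity
    have hk0 : (k : ℝ) ≠ 0 := by
      have : (2 : ℝ) ≤ (k : ℝ) := by exact_mod_cast hk
      linarith
    field_simp
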